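/- Let X be a finite indecomposable quandle with enveloping group G_X. Since G_X acts transitively on X and the center Z(G_X) is contained in the kernel of this action, every conjugacy class of G_X is finite. -/

import Mathlib

open Rack Quandles

private lemma closure_range_toEnvelGroup {X : Type*} [Quandle X] (g : EnvelGroup X) :
    g ∈ Subgroup.closure (Set.range (⇑(toEnvelGroup X))) := by
  induction g using Quotient.inductionOn with
  | h p =>
    induction p with
    | unit => exact Subgroup.one_mem _
    | incl x => exact Subgroup.subset_closure ⟨x, rfl⟩
    | mul a b iha ihb =>
      exact Subgroup.mul_mem _ iha ihb
    | inv a iha =>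
      exact Subgroup.inv_mem _ iha

private lemma conj_incl {X : Type*} [Quandle X] (g : EnvelGroup X) (y : X) :
    g * toEnvelGroup X y * g⁻¹ = toEnvelGroup X (envelAction g y) := by
  have hg := closure_range_toEnvelGroup g
  induction hg using Subgroup.closure_induction generalizing y with
  | mem a ha =>
    obtain ⟨x, rfl⟩ := ha
    rw [envelAction_prop]
    exact ((toEnvelGroup X).map_act' (x := x) (y := y)).symm
  | one => simp
  | mul a b _ _ iha ihb =>
    have : a * b * toEnvelGroup X y * (a * b)⁻¹
        = a * (b * toEnvelGroup X y * b⁻¹) * a⁻¹ := by group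
    rw [this, ihb, iha, map_mul]
    rfl
  | inv a _ iha =>
    have h1 := iha (envelAction a⁻¹ y)
    have h2 : envelAction a (envelAction a⁻¹ y) = y := by
      rw [← Equiv.Perm.mul_apply, ← map_mul, mul_inv_cancel, map_one, Equiv.Perm.one_apply]
    rw [h2] at h1
    have := congrArg (fun z => a⁻¹ * z * a) h1.symm
    simpa [mul_assoc] using this

/-- if the finite quandle `X` is indecomposable (its enveloping group acts
transitively on `X`), then every conjugacy class of the enveloping group `G_X` is finite. -/
theorem stmt_0 {X : Type*} [Quandle X] [Fintype X]
    (hind : ∀ x y : X, ∃ g : EnvelGroup X, envelAction g x = y)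
    (g : EnvelGroup X) :
    {h : EnvelGroup X | IsConj g h}.Finite := by
  classical
  -- the kernel of the action has finite index
  have hker : (envelAction (R := X)).ker.FiniteIndex := by
    have : Finite (envelAction (R := X)).range := Subtype.finite
    exact Subgroup.finiteIndex_ker _
  -- every element of the kernel is central
  have hcentral : ∀ k ∈ (envelAction (R := X)).ker, ∀ h : EnvelGroup X, h * k = k * h := by
    intro k hk h
    have hcomm : ∀ y : X, toEnvelGroup X y * k = k * toEnvelGroup X y := by
      intro y
      have := conj_incl k y
      rw [MonoidHom.mem_ker.mp hk, Equiv.Perm.one_apply] at this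
      calc toEnvelGroup X y * k = k * toEnvelGroup X y * k⁻¹ * k := by rw [this]
        _ = k * toEnvelGroup X y := by group
    have hle : Subgroup.closure (Set.range (⇑(toEnvelGroup X))) ≤ Subgroup.centralizer {k} := by
      rw [Subgroup.closure_le]
      rintro a ⟨y, rfl⟩
      rw [SetLike.mem_coe, Subgroup.mem_centralizer_iff]
      rintro m rfl
      exact (hcomm y).symm
    have := hle (closure_range_toEnvelGroup h)
    rw [Subgroup.mem_centralizer_iff] at this
    exact (this k rfl).symm
  -- hence the kernel is contained in the centralizer of g
  have hle : (envelAction (R := X)).ker ≤ Subgroup.centralizer {g} := by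
    intro k hk
    rw [Subgroup.mem_centralizer_iff]
    rintro m rfl
    exact hcentral k hk m
  have : (Subgroup.centralizer {g}).FiniteIndex := Subgroup.finiteIndex_of_le hle
  have hfin : Finite (EnvelGroup X ⧸ Subgroup.centralizer {g}) := Subgroup.finite_quotient_of_finiteIndex
  -- conjugacy class is covered by a function on the finite quotient
  set F : EnvelGroup X ⧸ Subgroup.centralizer {g} → EnvelGroup X :=
    Quotient.lift (fun h : EnvelGroup X => h * g * h⁻¹) (by
      intro a b hab
      have hab' : a⁻¹ * b ∈ Subgroup.centralizer {g} := (QuotientGroup.leftRel_apply).mp hab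
      rw [Subgroup.mem_centralizer_iff] at hab'
      have hcg : g * (a⁻¹ * b) = (a⁻¹ * b) * g := hab' g rfl
      have : b * g * b⁻¹ = a * ((a⁻¹ * b) * g * (a⁻¹ * b)⁻¹) * a⁻¹ := by group
      show a * g * a⁻¹ = b * g * b⁻¹
      rw [this, ← hcg]
      group) with hF
  apply Set.Finite.subset (Set.finite_range F)
  rintro h hh
  obtain ⟨c, hc⟩ := hh
  refine ⟨QuotientGroup.mk (c : EnvelGroup X), ?_⟩
  show (c : EnvelGroup X) * g * (c : EnvelGroup X)⁻¹ = h
  rw [mul_inv_eq_iff_eq_mul]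
  exact hc.eq
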